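/- Let f(z) = ∏_{i=0}^{m}(z^2+z+c_i) be a monic even-degree-d CL-polynomial (d = 2m+2) whose h*-polynomial has nonnegative coefficients. Then the constant coefficient of f, namely ∏ c_i = v_{d/2}, is ≥ 0, and -d·v_{d/2} + ∑_{l=0}^{d/2 - 1} 2^{d/2 - l} v_l ≥ 0, where v_l is the l-th elementary symmetric polynomial in c_0,...,c_m (with v_0 = 1). -/

import Mathlib

open Finset

lemma aux1 (n : ℕ) : (PowerSeries.coeff (R := ℝ) 1) ((1 - PowerSeries.X)^n) = -(n : ℝ) := by
  induction n with
  | zero => simp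
  | succ k ih =>
    rw [pow_succ, PowerSeries.coeff_one_mul, ih]
    simp
    ring

theorem stmt17 (m : ℕ) (c : ℕ → ℝ) (hc : ∀ i ≤ m, (1 : ℝ)/4 ≤ c i)
    (d : ℕ) (hd : d = 2 * m + 2)
    (f : ℝ → ℝ)
    (hf : ∀ x : ℝ, f x = ∏ i ∈ Finset.range (m + 1), (x ^ 2 + x + c i))
    (h : Polynomial ℝ)
    (hser : PowerSeries.mk (fun k : ℕ => f (k : ℝ)) * (1 - PowerSeries.X) ^ (d + 1)
      = (h : PowerSeries ℝ))
    (hpos : ∀ j, 0 ≤ h.coeff j)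
    (v : ℕ → ℝ)
    (hv : ∀ l, v l = ∑ S ∈ (Finset.range (m + 1)).powersetCard l, ∏ i ∈ S, c i) :
    0 ≤ v (m + 1) ∧
      0 ≤ -(d : ℝ) * v (m + 1) + ∑ l ∈ Finset.range (m + 1), 2 ^ (m + 1 - l) * v l := by
  -- v (m+1) = ∏ c i
  have hvtop : v (m + 1) = ∏ i ∈ Finset.range (m + 1), c i := by
    have hps : (Finset.range (m+1)).powersetCard (m+1) = {Finset.range (m+1)} := by
      simpa using Finset.powersetCard_self (Finset.range (m+1))
    rw [hv, hps, Finset.sum_singleton]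
  have hc0 : ∀ i ∈ Finset.range (m + 1), (0:ℝ) ≤ c i := by
    intro i hi
    have hi' := Finset.mem_range.1 hi
    have := hc i (by omega)
    linarith
  have h1 : 0 ≤ v (m + 1) := by
    rw [hvtop]; exact Finset.prod_nonneg hc0
  refine ⟨h1, ?_⟩
  -- f 0 and f 1
  have hf0 : f 0 = v (m + 1) := by
    rw [hf, hvtop]; exact Finset.prod_congr rfl (by intro i _; ring)
  -- coefficient 1 of h
  have hco : h.coeff 1 = f 1 - ((d : ℝ) + 1) * f 0 := by
    have := congrArg (PowerSeries.coeff (R := ℝ) 1) hser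
    rw [PowerSeries.coeff_one_mul, aux1, Polynomial.coeff_coe] at this
    simp only [PowerSeries.coeff_zero_eq_constantCoeff, map_pow, map_sub, map_one,
      PowerSeries.constantCoeff_X, sub_zero, one_pow, PowerSeries.coeff_mk,
      PowerSeries.constantCoeff_mk, Nat.cast_zero, Nat.cast_one] at this
    push_cast at this
    rw [← this]
    ring
  -- product expansion: f 1 = ∑_{l=0}^{m+1} 2^{m+1-l} v l
  have hexp : f 1 = ∑ l ∈ Finset.range (m + 2), 2 ^ (m + 1 - l) * v l := by
    have h2 : f 1 = ∏ i ∈ Finset.range (m + 1), (c i + 2) := by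
      rw [hf]; exact Finset.prod_congr rfl (by intro i _; ring)
    rw [h2, Finset.prod_add]
    rw [← Finset.sum_fiberwise_of_maps_to (g := Finset.card)
      (t := Finset.range (m + 2)) (fun S hS => by
        rw [Finset.mem_range, Nat.lt_succ_iff]
        simpa using Finset.card_le_card (Finset.mem_powerset.1 hS))]
    refine Finset.sum_congr rfl fun l hl => ?_
    rw [hv, Finset.mul_sum]
    rw [← Finset.powersetCard_eq_filter]
    refine Finset.sum_congr rfl fun S hS => ?_
    obtain ⟨hSsub, hScard⟩ := Finset.mem_powersetCard.1 hS
    rw [Finset.prod_const, Finset.card_sdiff_of_subset hSsub, Finset.card_range, hScard, mul_comm]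
  -- split off the top term
  have hsplit : ∑ l ∈ Finset.range (m + 2), (2:ℝ) ^ (m + 1 - l) * v l
      = (∑ l ∈ Finset.range (m + 1), 2 ^ (m + 1 - l) * v l) + v (m + 1) := by
    rw [Finset.sum_range_succ]
    simp
  have := hpos 1
  rw [hco] at this
  rw [hf0, hexp, hsplit] at this
  have hdc : (d : ℝ) = 2 * m + 2 := by rw [hd]; push_cast; ring
  linarith
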